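/- arXiv:1805.00647 — 4 statements merged into one kernel-verified Lean document; each statement's English description precedes it below -/
import Mathlib

section
/- The group G = ⟨a, b | a^q = b^{p²} = 1, bab^{-1} = a^i⟩ where p < q are primes and i has multiplicative order p modulo q, has exactly q + 4 cyclic subgroups. -/
open Subgroup Finset

/-- The number of cyclic subgroups of a group `G`. -/
noncomputable def numCyclic (G : Type*) [Group G] : ℕ := Nat.card {H : Subgroup G // IsCyclic H}

section StmtAux

variable {G : Type*} [Group G] {a b : G} {i p q : ℕ}

private lemma stmt7_conj1 (hrel : b * a * b⁻¹ = a ^ i) (t : ℕ) :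
    b ^ t * a * (b ^ t)⁻¹ = a ^ (i ^ t) := by
  induction t with
  | zero => simp
  | succ t ih =>
      have h1 : b ^ (t+1) * a * (b ^ (t+1))⁻¹ = b * (b ^ t * a * (b ^ t)⁻¹) * b⁻¹ := by
        group
      rw [h1, ih, ← conj_pow, hrel, ← pow_mul, pow_succ]
      ring_nf

private lemma stmt7_swap (hrel : b * a * b⁻¹ = a ^ i) (s t : ℕ) :
    b ^ t * a ^ s = a ^ (s * i ^ t) * b ^ t := by
  have h := stmt7_conj1 hrel t
  have h2 : b ^ t * a ^ s * (b ^ t)⁻¹ = a ^ (i ^ t * s) := by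
    rw [← conj_pow, h, ← pow_mul]
  have h3 := congrArg (· * b ^ t) h2
  simpa [mul_assoc, mul_comm s] using h3

private lemma stmt7_powForm (hrel : b * a * b⁻¹ = a ^ i) (k m n : ℕ) :
    (a ^ k * b ^ m) ^ n = a ^ (k * ∑ j ∈ range n, i ^ (j * m)) * b ^ (m * n) := by
  induction n with
  | zero => simp
  | succ n ih =>
      rw [pow_succ, ih, sum_range_succ]
      have hs : b ^ (m * n) * a ^ k = a ^ (k * i ^ (m * n)) * b ^ (m * n) :=
        stmt7_swap hrel k (m*n)
      calc a ^ (k * ∑ j ∈ range n, i ^ (j * m)) * b ^ (m * n) * (a ^ k * b ^ m)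
          = a ^ (k * ∑ j ∈ range n, i ^ (j * m)) * (b ^ (m * n) * a ^ k) * b ^ m := by
            simp [mul_assoc]
        _ = a ^ (k * ∑ j ∈ range n, i ^ (j * m)) * (a ^ (k * i ^ (n * m)) * b ^ (m * n)) * b ^ m := by
            rw [hs, mul_comm m n]
        _ = a ^ (k * (∑ j ∈ range n, i ^ (j * m) + i ^ (n * m))) * b ^ (m * (n+1)) := by
            rw [mul_add, pow_add, Nat.mul_succ, pow_add]
            simp [mul_assoc]

private lemma stmt7_surjForm [Finite G] (hrel : b * a * b⁻¹ = a ^ i)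
    (hgen : Subgroup.closure {a, b} = ⊤) (g : G) :
    ∃ k m : ℕ, g = a ^ k * b ^ m := by
  set S : Subgroup G :=
    { carrier := {g : G | ∃ k m : ℕ, g = a ^ k * b ^ m}
      one_mem' := ⟨0, 0, by simp⟩
      mul_mem' := by
        rintro x y ⟨k, m, rfl⟩ ⟨k', m', rfl⟩
        refine ⟨k + k' * i ^ m, m + m', ?_⟩
        rw [pow_add, pow_add]
        calc a ^ k * b ^ m * (a ^ k' * b ^ m')
            = a ^ k * (b ^ m * a ^ k') * b ^ m' := by simp [mul_assoc]
          _ = a ^ k * (a ^ (k' * i ^ m) * b ^ m) * b ^ m' := by rw [stmt7_swap hrel]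
          _ = a ^ k * a ^ (k' * i ^ m) * (b ^ m * b ^ m') := by simp [mul_assoc]
      inv_mem' := by
        rintro x hx
        have hpow : ∀ n : ℕ, x ^ n ∈ {g : G | ∃ k m : ℕ, g = a ^ k * b ^ m} := by
          intro n
          induction n with
          | zero => exact ⟨0, 0, by simp⟩
          | succ n ih =>
              obtain ⟨k, m, hkm⟩ := ih
              obtain ⟨k', m', hkm'⟩ := hx
              refine ⟨k + k' * i ^ m, m + m', ?_⟩
              rw [pow_succ, hkm, hkm', pow_add, pow_add]
              calc a ^ k * b ^ m * (a ^ k' * b ^ m')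
                  = a ^ k * (b ^ m * a ^ k') * b ^ m' := by simp [mul_assoc]
                _ = a ^ k * (a ^ (k' * i ^ m) * b ^ m) * b ^ m' := by rw [stmt7_swap hrel]
                _ = a ^ k * a ^ (k' * i ^ m) * (b ^ m * b ^ m') := by simp [mul_assoc]
        have h1 : x ⁻¹ = x ^ (orderOf x - 1) := by
          have h2 : orderOf x - 1 + 1 = orderOf x := by
            have := orderOf_pos x; omega
          rw [eq_comm, eq_comm (b := x⁻¹), inv_eq_iff_mul_eq_one, ← pow_succ', h2,
            pow_orderOf_eq_one]
        rw [h1]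
        exact hpow _ }
  have haS : a ∈ S := ⟨1, 0, by simp⟩
  have hbS : b ∈ S := ⟨0, 1, by simp⟩
  have htop : Subgroup.closure {a, b} ≤ S := by
    rw [Subgroup.closure_le]
    rintro x (rfl | rfl) <;> assumption
  rw [hgen] at htop
  exact htop (Subgroup.mem_top g)

private lemma stmt7_orders [Finite G] (hp : p.Prime) (hq : q.Prime) (hpq : p < q)
    (ha : a ^ q = 1) (hb : b ^ (p ^ 2) = 1) (hrel : b * a * b⁻¹ = a ^ i)
    (hgen : Subgroup.closure {a, b} = ⊤) (hcard : Nat.card G = q * p ^ 2) :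
    orderOf a = q ∧ orderOf b = p ^ 2 := by
  have hoa : orderOf a ∣ q := orderOf_dvd_iff_pow_eq_one.mpr ha
  have hob : orderOf b ∣ p ^ 2 := orderOf_dvd_iff_pow_eq_one.mpr hb
  have hsurj : Function.Surjective
      (fun x : Fin (orderOf a) × Fin (orderOf b) => a ^ (x.1 : ℕ) * b ^ (x.2 : ℕ)) := by
    intro g
    obtain ⟨k, m, rfl⟩ := stmt7_surjForm hrel hgen g
    refine ⟨(⟨k % orderOf a, Nat.mod_lt _ (orderOf_pos a)⟩,
      ⟨m % orderOf b, Nat.mod_lt _ (orderOf_pos b)⟩), ?_⟩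
    simp [pow_mod_orderOf]
  have hle : Nat.card G ≤ orderOf a * orderOf b := by
    have := Nat.card_le_card_of_surjective _ hsurj
    simpa [Nat.card_eq_fintype_card] using this
  rw [hcard] at hle
  have h2p : 2 ≤ p := hp.two_le
  have h2q : 2 ≤ q := hq.two_le
  have hoaq : orderOf a = q := by
    rcases Nat.Prime.eq_one_or_self_of_dvd hq _ hoa with h | h
    · exfalso
      rw [h, one_mul] at hle
      have : orderOf b ≤ p ^ 2 := Nat.le_of_dvd (by positivity) hob
      nlinarith
    · exact h
  refine ⟨hoaq, ?_⟩
  rw [hoaq] at hle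
  have h1 : orderOf b ≤ p ^ 2 := Nat.le_of_dvd (by positivity) hob
  have h2 : p ^ 2 ≤ orderOf b := by
    by_contra hcon
    push_neg at hcon
    nlinarith
  omega

end StmtAux
set_option maxHeartbeats 1600000 in
/-- The group `⟨a, b | a^q = b^(p²) = 1, b a b⁻¹ = a^i⟩`, where `p < q` are primes and
`i` has multiplicative order `p` modulo `q`, has exactly `q + 4` cyclic subgroups. -/
theorem stmt_7 (G : Type*) [Group G] [Finite G] (p q i : ℕ) (hp : p.Prime) (hq : q.Prime)
    (hpq : p < q) (hi : orderOf (i : ZMod q) = p)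
    (a b : G) (ha : a ^ q = 1) (hb : b ^ (p ^ 2) = 1) (hrel : b * a * b⁻¹ = a ^ i)
    (hgen : Subgroup.closure {a, b} = ⊤) (hcard : Nat.card G = q * p ^ 2) :
    numCyclic G = q + 4 := by
  haveI : Fact q.Prime := ⟨hq⟩
  haveI : NeZero q := ⟨hq.ne_zero⟩
  have h2p : 2 ≤ p := hp.two_le
  have h2q : 2 ≤ q := hq.two_le
  obtain ⟨OA, OB⟩ := stmt7_orders hp hq hpq ha hb hrel hgen hcard
  -- facts about i
  have hipow : (i : ZMod q) ^ p = 1 := by rw [← hi]; exact pow_orderOf_eq_one _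
  have hidvd : ∀ m : ℕ, (i : ZMod q) ^ m = 1 ↔ p ∣ m := by
    intro m; rw [← hi]; exact orderOf_dvd_iff_pow_eq_one.symm
  have hi1 : (i : ZMod q) ≠ 1 := by
    intro h
    rw [h, orderOf_one] at hi
    omega
  -- exponent keys
  have akey : ∀ x y : ℕ, a ^ x = a ^ y ↔ ((x : ZMod q) = (y : ZMod q)) := by
    intro x y
    rw [pow_eq_pow_iff_modEq, OA]
    exact (ZMod.natCast_eq_natCast_iff x y q).symm
  have bkey : ∀ x y : ℕ, b ^ x = b ^ y ↔ ((x : ZMod (p^2)) = (y : ZMod (p^2))) := by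
    intro x y
    rw [pow_eq_pow_iff_modEq, OB]
    exact (ZMod.natCast_eq_natCast_iff x y (p^2)).symm
  have aone : ∀ x : ℕ, a ^ x = 1 ↔ ((x : ZMod q) = 0) := by
    intro x
    have := akey x 0
    simpa using this
  have hcopqp : Nat.Coprime q p := (Nat.coprime_primes hq hp).mpr (ne_of_gt hpq)
  -- uniqueness of normal form
  have nfInj : ∀ k m k' m' : ℕ, a ^ k * b ^ m = a ^ k' * b ^ m' →
      ((k : ZMod q) = (k' : ZMod q) ∧ ((m : ZMod (p^2)) = (m' : ZMod (p^2)))) := by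
    intro k m k' m' h
    have key : ∀ x : G, x ∈ zpowers a → x ∈ zpowers b → x = 1 := by
      intro x hxa hxb
      have d1 := orderOf_dvd_of_mem_zpowers hxa
      have d2 := orderOf_dvd_of_mem_zpowers hxb
      rw [OA] at d1; rw [OB] at d2
      have hd : orderOf x ∣ Nat.gcd q (p ^ 2) := Nat.dvd_gcd d1 d2
      have : orderOf x ∣ 1 := by
        rwa [Nat.Coprime.gcd_eq_one (hcopqp.pow_right 2)] at hd
      rw [Nat.dvd_one] at this
      exact orderOf_eq_one_iff.mp this
    have hx : (a ^ k')⁻¹ * a ^ k = b ^ m' * (b ^ m)⁻¹ := by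
      have h2 := congrArg (fun z => (a ^ k')⁻¹ * (z * (b ^ m)⁻¹)) h
      simpa [mul_assoc] using h2
    have hxa : (a ^ k')⁻¹ * a ^ k ∈ zpowers a :=
      mul_mem (inv_mem (pow_mem (mem_zpowers a) k')) (pow_mem (mem_zpowers a) k)
    have hxb : (a ^ k')⁻¹ * a ^ k ∈ zpowers b := by
      rw [hx]
      exact mul_mem (pow_mem (mem_zpowers b) m') (inv_mem (pow_mem (mem_zpowers b) m))
    have h1 := key _ hxa hxb
    constructor
    · rw [← akey]
      exact (inv_mul_eq_one.mp h1).symm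
    · rw [← bkey]
      have h4 : b ^ m' * (b ^ m)⁻¹ = 1 := hx.symm.trans h1
      exact ((mul_inv_eq_one.mp h4)).symm
  -- casting geometric sums
  have castSum : ∀ m n : ℕ, ((∑ j ∈ range n, i ^ (j * m) : ℕ) : ZMod q)
      = ∑ j ∈ range n, ((i : ZMod q) ^ m) ^ j := by
    intro m n
    push_cast
    refine Finset.sum_congr rfl fun j _ => ?_
    rw [← pow_mul, mul_comm]
  -- the order p^2 elements
  have ordp2 : ∀ k m : ℕ, ¬ p ∣ m → orderOf (a ^ k * b ^ m) = p ^ 2 := by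
    intro k m hm
    have hx1 : ((i : ZMod q) ^ m) ≠ 1 := fun h => hm ((hidvd m).1 h)
    have hsum : ((∑ j ∈ range (p ^ 2), i ^ (j * m) : ℕ) : ZMod q) = 0 := by
      rw [castSum, geom_sum_eq hx1]
      have hxp2 : ((i : ZMod q) ^ m) ^ (p ^ 2) = 1 := by
        rw [← pow_mul]
        exact (hidvd _).mpr ⟨m * p, by ring⟩
      rw [hxp2]
      simp
    have hp2 : (a ^ k * b ^ m) ^ (p ^ 2) = 1 := by
      rw [stmt7_powForm hrel]
      have h1 : a ^ (k * ∑ j ∈ range (p ^ 2), i ^ (j * m)) = 1 := by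
        rw [aone, Nat.cast_mul, hsum, mul_zero]
      have h2 : b ^ (m * p ^ 2) = 1 := by
        rw [mul_comm, pow_mul, hb, one_pow]
      rw [h1, h2, one_mul]
    have hdvd : orderOf (a ^ k * b ^ m) ∣ p ^ 2 := orderOf_dvd_iff_pow_eq_one.mpr hp2
    have hnp : ¬ orderOf (a ^ k * b ^ m) ∣ p := by
      intro hcon
      have hcon1 : (a ^ k * b ^ m) ^ p = 1 := orderOf_dvd_iff_pow_eq_one.mp hcon
      rw [stmt7_powForm hrel] at hcon1
      have hcon2 : a ^ (k * ∑ j ∈ range p, i ^ (j * m)) * b ^ (m * p) = a ^ 0 * b ^ 0 := by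
        simpa using hcon1
      obtain ⟨_, h2⟩ := nfInj _ _ _ _ hcon2
      rw [Nat.cast_zero, ZMod.natCast_eq_zero_iff] at h2
      have hpp : p * p ∣ m * p := by rwa [← pow_two]
      have : p ∣ m := by
        have := (Nat.mul_dvd_mul_iff_right (show 0 < p by omega)).mp hpp
        exact this
      exact hm this
    rcases (Nat.dvd_prime_pow hp).1 hdvd with ⟨e, he, hoe⟩
    interval_cases e
    · exfalso; exact hnp (by rw [hoe]; exact one_dvd p)
    · exfalso; exact hnp (by rw [hoe, pow_one])
    · rw [hoe]
  -- specialized power formula with m = 1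
  have pf1 : ∀ K n : ℕ, (a ^ K * b) ^ n = a ^ (K * ∑ j ∈ range n, i ^ j) * b ^ n := by
    intro K n
    have h := stmt7_powForm hrel K 1 n
    simpa using h
  -- b ^ p is central w.r.t. a
  have hcomm : Commute a (b ^ p) := by
    have h := stmt7_swap hrel 1 p
    have h2 : a ^ (1 * i ^ p) = a ^ 1 := by
      rw [akey]
      push_cast
      rw [hipow]
      simp
    rw [h2, pow_one] at h
    exact h.symm
  -- order facts for the special generators
  have hobp : orderOf (b ^ p) = p := by
    rw [orderOf_pow, OB, Nat.gcd_eq_right (dvd_pow_self p two_ne_zero), pow_two,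
      Nat.mul_div_cancel _ (by omega)]
  have hoabp : orderOf (a * b ^ p) = q * p := by
    rw [Commute.orderOf_mul_eq_mul_orderOf_of_coprime hcomm, OA, hobp]
    rw [OA, hobp]
    exact hcopqp
  -- the family of cyclic subgroups
  set F : ZMod q ⊕ Fin 4 → Subgroup G := Sum.elim (fun s => zpowers (a ^ s.val * b))
    ![⊥, zpowers (b ^ p), zpowers a, zpowers (a * b ^ p)] with hF
  have hcS : ∀ s : ZMod q, Nat.card (zpowers (a ^ s.val * b)) = p ^ 2 := by
    intro s
    rw [Nat.card_zpowers]
    have := ordp2 s.val 1 (by simpa using hp.one_lt.ne')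
    simpa using this
  -- numeric distinctness
  have hq_ne_p2 : q ≠ p ^ 2 := by
    intro h
    have hdvd : p ∣ q := h ▸ dvd_pow_self p two_ne_zero
    rcases (Nat.Prime.eq_one_or_self_of_dvd hq _ hdvd) with h' | h' <;> omega
  have hqp_ne_p2 : q * p ≠ p ^ 2 := by
    intro h
    rw [pow_two] at h
    have : q = p := by
      have := Nat.eq_of_mul_eq_mul_right (show 0 < p by omega) h
      exact this
    omega
  have hp2_ne_1 : p ^ 2 ≠ 1 := by nlinarith
  have hp2_ne_p : p ^ 2 ≠ p := by nlinarith
  have hqp_ne_1 : q * p ≠ 1 := by nlinarith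
  have hqp_ne_p : q * p ≠ p := by nlinarith
  have hqp_ne_q : q * p ≠ q := by nlinarith
  -- injectivity
  have hFinj : Function.Injective F := by
    have hcF : ∀ x, Nat.card (F x) = Sum.elim (fun _ : ZMod q => p ^ 2)
        (![1, p, q, q * p] : Fin 4 → ℕ) x := by
      rintro (s | j)
      · exact hcS s
      · fin_cases j <;>
          simp [hF, Subgroup.card_bot, Nat.card_zpowers, hobp, OA, hoabp]
    intro x y h
    have hcxy := (hcF x).symm.trans ((congrArg (fun H : Subgroup G => Nat.card H) h).trans (hcF y))
    rcases x with s | j <;> rcases y with s' | j'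
    · -- main case: two conjugate Sylow p-subgroups
      have hmem : a ^ s.val * b ∈ zpowers (a ^ s'.val * b) := by
        have : a ^ s.val * b ∈ F (Sum.inl s) := mem_zpowers _
        rw [h] at this
        exact this
      rw [← mem_powers_iff_mem_zpowers, Submonoid.mem_powers_iff] at hmem
      obtain ⟨n, hn⟩ := hmem
      rw [pf1] at hn
      rw [show a ^ s.val * b = a ^ s.val * b ^ 1 by rw [pow_one]] at hn
      obtain ⟨h1, h2⟩ := nfInj _ _ _ _ hn
      -- from h2 : n ≡ 1 mod p^2, deduce the geometric sum is 1 mod q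
      have hmodp : n ≡ 1 [MOD p] := by
        have hmodp2 : n ≡ 1 [MOD p ^ 2] := by
          rwa [ZMod.natCast_eq_natCast_iff] at h2
        exact hmodp2.of_dvd (dvd_pow_self p two_ne_zero)
      have hxn : (i : ZMod q) ^ n = (i : ZMod q) ^ 1 := by
        have hn1 : n % p = 1 := by
          have h' : n % p = 1 % p := hmodp
          have h'' : 1 % p = 1 := Nat.mod_eq_of_lt (by omega)
          omega
        have hdecomp : n = p * (n / p) + 1 := by
          have := Nat.div_add_mod n p
          omega
        rw [hdecomp, pow_add, pow_mul, hipow, one_pow, one_mul]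
      have hsum1 : ((∑ j ∈ range n, i ^ j : ℕ) : ZMod q) = 1 := by
        have hcs := castSum 1 n
        simp only [mul_one, pow_one] at hcs
        rw [hcs, geom_sum_eq hi1, hxn, pow_one, div_self (sub_ne_zero.mpr hi1)]
      rw [Nat.cast_mul, hsum1, mul_one] at h1
      have : s' = s := by
        have e1 : ((s'.val : ℕ) : ZMod q) = s' := ZMod.natCast_rightInverse s'
        have e2 : ((s.val : ℕ) : ZMod q) = s := ZMod.natCast_rightInverse s
        rw [e1, e2] at h1
        exact h1
      rw [this]
    · exfalso
      fin_cases j' <;> simp at hcxy <;> omega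
    · exfalso
      fin_cases j <;> simp at hcxy <;> omega
    · fin_cases j <;> fin_cases j' <;> first
        | rfl
        | (exfalso; simp at hcxy <;> omega)
  -- every cyclic subgroup is in the range of F
  have hFsurj : ∀ H : Subgroup G, IsCyclic H → ∃ x, F x = H := by
    intro H hH
    obtain ⟨⟨g, hgH⟩, hgen'⟩ := hH.exists_generator
    have hHz : H = zpowers g := by
      apply le_antisymm
      · intro x hx
        have hx2 := hgen' ⟨x, hx⟩
        rw [Subgroup.mem_zpowers_iff] at hx2
        rw [Subgroup.mem_zpowers_iff]
        obtain ⟨n, hn⟩ := hx2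
        exact ⟨n, by have := congrArg Subtype.val hn; simpa using this⟩
      · exact zpowers_le.mpr hgH
    obtain ⟨k0, m0, hg0⟩ := stmt7_surjForm hrel hgen g
    set k := k0 % q with hk_def
    set m := m0 % (p ^ 2) with hm_def
    have hkq : k < q := Nat.mod_lt _ (by omega)
    have hmp : m < p ^ 2 := Nat.mod_lt _ (by positivity)
    have hg' : g = a ^ k * b ^ m := by
      have e1 : a ^ k = a ^ k0 := by rw [hk_def, ← OA, pow_mod_orderOf]
      have e2 : b ^ m = b ^ m0 := by rw [hm_def, ← OB, pow_mod_orderOf]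
      rw [hg0, e1, e2]
    by_cases hpm : p ∣ m
    · set m' := m / p with hm'_def
      have hmm : m = p * m' := (Nat.mul_div_cancel' hpm).symm
      have hm'p : m' < p := by
        have h6 : p * m' < p * p := by rw [← hmm, ← pow_two]; exact hmp
        exact lt_of_mul_lt_mul_left h6 (Nat.zero_le p)
      by_cases hk0 : k = 0
      · by_cases hm'0 : m' = 0
        · refine ⟨Sum.inr 0, ?_⟩
          have hg1 : g = 1 := by
            rw [hg', hk0, hmm, hm'0, mul_zero, pow_zero, pow_zero, one_mul]
          rw [hHz, hg1, zpowers_one_eq_bot]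
          simp [hF]
        · refine ⟨Sum.inr 1, ?_⟩
          have hgbp : g = (b ^ p) ^ m' := by
            rw [hg', hk0, pow_zero, one_mul, hmm, pow_mul]
          have hle : zpowers g ≤ zpowers (b ^ p) :=
            zpowers_le.mpr (by rw [hgbp]; exact pow_mem (mem_zpowers _) m')
          have hndvd : ¬ p ∣ m' := by
            intro hd
            have := Nat.le_of_dvd (Nat.pos_of_ne_zero hm'0) hd
            omega
          have hog : orderOf g = p := by
            rw [hgbp, orderOf_pow, hobp, Nat.Coprime.gcd_eq_one, Nat.div_one]
            exact (hp.coprime_iff_not_dvd).mpr hndvd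
          have heq : zpowers g = zpowers (b ^ p) :=
            Subgroup.eq_of_le_of_card_ge hle
              (by rw [Nat.card_zpowers, Nat.card_zpowers, hog, hobp])
          rw [hHz, heq]
          simp [hF]
      · have hqk : ¬ q ∣ k := by
          intro hd
          have := Nat.le_of_dvd (Nat.pos_of_ne_zero hk0) hd
          omega
        have hoak : orderOf (a ^ k) = q := by
          rw [orderOf_pow, OA, Nat.Coprime.gcd_eq_one, Nat.div_one]
          exact (hq.coprime_iff_not_dvd).mpr hqk
        by_cases hm'0 : m' = 0
        · refine ⟨Sum.inr 2, ?_⟩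
          have hga : g = a ^ k := by
            rw [hg', hmm, hm'0, mul_zero, pow_zero, mul_one]
          have hle : zpowers g ≤ zpowers a :=
            zpowers_le.mpr (by rw [hga]; exact pow_mem (mem_zpowers _) k)
          have heq : zpowers g = zpowers a :=
            Subgroup.eq_of_le_of_card_ge hle
              (by rw [Nat.card_zpowers, Nat.card_zpowers, hga, hoak, OA])
          rw [hHz, heq]
          simp [hF]
        · refine ⟨Sum.inr 3, ?_⟩
          have hndvd : ¬ p ∣ m' := by
            intro hd
            have := Nat.le_of_dvd (Nat.pos_of_ne_zero hm'0) hd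
            omega
          have hobm : orderOf ((b ^ p) ^ m') = p := by
            rw [orderOf_pow, hobp, Nat.Coprime.gcd_eq_one, Nat.div_one]
            exact (hp.coprime_iff_not_dvd).mpr hndvd
          obtain ⟨n, hn1, hn2⟩ := Nat.chineseRemainder hcopqp k m'
          have e3 : a ^ n = a ^ k := (akey n k).mpr ((ZMod.natCast_eq_natCast_iff n k q).mpr hn1)
          have e4 : (b ^ p) ^ n = (b ^ p) ^ m' := by
            rw [← pow_mul, ← pow_mul, bkey, ZMod.natCast_eq_natCast_iff]
            have h5 := Nat.ModEq.mul_left' (c := p) hn2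
            rwa [pow_two]
          have hgm : g = (a * b ^ p) ^ n := by
            rw [hcomm.mul_pow, e3, e4, hg', hmm, pow_mul]
          have hle : zpowers g ≤ zpowers (a * b ^ p) :=
            zpowers_le.mpr (by rw [hgm]; exact pow_mem (mem_zpowers _) n)
          have hog : orderOf g = q * p := by
            rw [hg', hmm, pow_mul]
            rw [Commute.orderOf_mul_eq_mul_orderOf_of_coprime (hcomm.pow_pow k m'), hoak, hobm]
            rw [hoak, hobm]
            exact hcopqp
          have heq : zpowers g = zpowers (a * b ^ p) :=
            Subgroup.eq_of_le_of_card_ge hle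
              (by rw [Nat.card_zpowers, Nat.card_zpowers, hog, hoabp])
          rw [hHz, heq]
          simp [hF]
    · -- order p^2 case
      have hx1 : ((i : ZMod q) ^ m) ≠ 1 := fun h => hpm ((hidvd m).1 h)
      have hsumNe : ((∑ j ∈ range m, i ^ j : ℕ) : ZMod q) ≠ 0 := by
        have hcs := castSum 1 m
        simp only [mul_one, pow_one] at hcs
        rw [hcs, geom_sum_eq hi1]
        exact div_ne_zero (sub_ne_zero.mpr hx1) (sub_ne_zero.mpr hi1)
      set s : ZMod q := (k : ZMod q) * ((∑ j ∈ range m, i ^ j : ℕ) : ZMod q)⁻¹ with hs_def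
      refine ⟨Sum.inl s, ?_⟩
      have key : (a ^ s.val * b) ^ m = a ^ k * b ^ m := by
        rw [pf1]
        congr 1
        rw [akey, Nat.cast_mul]
        have e1 : ((s.val : ℕ) : ZMod q) = s := ZMod.natCast_rightInverse s
        rw [e1, hs_def, mul_assoc, inv_mul_cancel₀ hsumNe, mul_one]
      have hle : zpowers g ≤ zpowers (a ^ s.val * b) :=
        zpowers_le.mpr (by rw [hg', ← key]; exact pow_mem (mem_zpowers _) m)
      have heq : zpowers g = zpowers (a ^ s.val * b) :=
        Subgroup.eq_of_le_of_card_ge hle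
          (by
            rw [Nat.card_zpowers, Nat.card_zpowers, hg', ordp2 k m hpm]
            have h7 := ordp2 s.val 1 (by simpa using hp.one_lt.ne')
            simp only [pow_one] at h7
            rw [h7])
      rw [hHz, heq]
      simp [hF]
  -- assembling
  have hFcyc : ∀ x, IsCyclic (F x) := by
    rintro (sx | j)
    · exact isCyclic_of_surjective _ (zpowersHom G _).rangeRestrict_surjective
    · fin_cases j
      · exact inferInstanceAs (IsCyclic (⊥ : Subgroup G))
      · exact isCyclic_of_surjective _ (zpowersHom G (b ^ p)).rangeRestrict_surjective
      · exact isCyclic_of_surjective _ (zpowersHom G a).rangeRestrict_surjective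
      · exact isCyclic_of_surjective _ (zpowersHom G (a * b ^ p)).rangeRestrict_surjective
  set F' : ZMod q ⊕ Fin 4 → {H : Subgroup G // IsCyclic H} := fun x => ⟨F x, hFcyc x⟩ with hF'
  have hbij : Function.Bijective F' := by
    constructor
    · intro x y hxy
      exact hFinj (congrArg Subtype.val hxy)
    · rintro ⟨H, hH⟩
      obtain ⟨x, hx⟩ := hFsurj H hH
      exact ⟨x, Subtype.ext hx⟩
  have hcount := Nat.card_eq_of_bijective F' hbij
  rw [numCyclic, ← hcount, Nat.card_sum, Nat.card_zmod]
  simp [Nat.card_eq_fintype_card]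
end

section
/- The group G = ⟨a, b | a^q = b^{p²} = 1, bab^{-1} = a^i⟩ where p < q are primes and i has multiplicative order p² modulo q, has exactly 2q + 2 cyclic subgroups. -/
open Subgroup Finset Pointwise

set_option maxHeartbeats 1000000

private lemma powEqOfMod {G : Type*} [Group G] (x : G) (c m n : ℕ) (hx : x ^ c = 1)
    (h : m % c = n % c) : x ^ m = x ^ n := by
  conv_lhs => rw [← Nat.mod_add_div m c]
  conv_rhs => rw [← Nat.mod_add_div n c]
  rw [pow_add, pow_add, pow_mul, pow_mul, hx, one_pow, one_pow, h]

private lemma geomZero {F : Type*} [Field F] (w : F) (n : ℕ) (hw : w ≠ 1) (h : w ^ n = 1) :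
    ∑ t ∈ Finset.range n, w ^ t = 0 := by
  have h2 := geom_sum_mul w n
  rw [h, sub_self] at h2
  rcases mul_eq_zero.mp h2 with h3 | h3
  · exact h3
  · exact absurd (sub_eq_zero.mp h3) hw

private lemma geomMod {F : Type*} [Field F] (w : F) (c : ℕ) (hw : w ≠ 1)
    (h : w ^ c = 1) (n : ℕ) :
    ∑ t ∈ Finset.range n, w ^ t = ∑ t ∈ Finset.range (n % c), w ^ t := by
  conv_lhs => rw [← Nat.mod_add_div n c]
  generalize n / c = s
  induction s with
  | zero => simp
  | succ s ih =>
    have h1 : n % c + c * (s + 1) = (n % c + c * s) + c := by ring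
    rw [h1, Finset.sum_range_add, ih]
    have h2 : ∑ t ∈ Finset.range c, w ^ (n % c + c * s + t) = 0 := by
      have h3 : ∀ t ∈ Finset.range c, w ^ (n % c + c * s + t)
          = w ^ (n % c + c * s) * w ^ t := fun t _ => by rw [pow_add]
      rw [Finset.sum_congr rfl h3, ← Finset.mul_sum, geomZero w c hw h, mul_zero]
    rw [h2, add_zero]

private lemma subgroupEq {G : Type*} [Group G] [Finite G] {H K : Subgroup G} (h : H ≤ K)
    (hc : Nat.card K ≤ Nat.card H) : H = K := by
  apply SetLike.coe_injective
  refine Set.eq_of_subset_of_ncard_le h ?_ (Set.toFinite _)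
  rwa [← Nat.card_coe_set_eq, ← Nat.card_coe_set_eq]

private lemma isCyclicZpowers {G : Type*} [Group G] (g : G) : IsCyclic (Subgroup.zpowers g) := by
  refine ⟨⟨⟨g, Subgroup.mem_zpowers g⟩, fun x => ?_⟩⟩
  obtain ⟨k, hk⟩ := Subgroup.mem_zpowers_iff.mp x.2
  exact Subgroup.mem_zpowers_iff.mpr ⟨k, Subtype.ext (by simpa using hk)⟩

private lemma cyclicEqZpowers {G : Type*} [Group G] {H : Subgroup G} (h : IsCyclic H) :
    ∃ g : G, Subgroup.zpowers g = H := by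
  obtain ⟨⟨g, hg⟩, hgen⟩ := h.exists_generator
  refine ⟨g, le_antisymm (Subgroup.zpowers_le.mpr hg) ?_⟩
  intro x hx
  obtain ⟨k, hk⟩ := Subgroup.mem_zpowers_iff.mp (hgen ⟨x, hx⟩)
  exact Subgroup.mem_zpowers_iff.mpr ⟨k, by simpa using congrArg Subtype.val hk⟩

/-- The group `⟨a, b | a^q = b^(p²) = 1, b a b⁻¹ = a^i⟩`, where `p < q` are primes and
`i` has multiplicative order `p²` modulo `q`, has exactly `2q + 2` cyclic subgroups. -/
theorem stmt_8 (G : Type*) [Group G] [Finite G] (p q i : ℕ) (hp : p.Prime) (hq : q.Prime)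
    (hpq : p < q) (hi : orderOf (i : ZMod q) = p ^ 2)
    (a b : G) (ha : a ^ q = 1) (hb : b ^ (p ^ 2) = 1) (hrel : b * a * b⁻¹ = a ^ i)
    (hgen : Subgroup.closure {a, b} = ⊤) (hcard : Nat.card G = q * p ^ 2) :
    numCyclic G = 2 * q + 2 := by
  classical
  have hp1 : 1 < p := hp.one_lt
  have hq1 : 1 < q := hq.one_lt
  have hq0 : 0 < q := hq.pos
  have hp2pos : 0 < p ^ 2 := by positivity
  have hp2 : 1 < p ^ 2 := by nlinarith
  haveI : NeZero q := ⟨hq0.ne'⟩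
  haveI : NeZero (p ^ 2) := ⟨hp2pos.ne'⟩
  haveI : Fact q.Prime := ⟨hq⟩
  haveI : Fact p.Prime := ⟨hp⟩
  set w : ZMod q := (i : ZMod q) with hw_def
  have hw2 : w ^ p ^ 2 = 1 := by rw [← hi]; exact pow_orderOf_eq_one w
  have hwne : w ≠ 1 := by
    intro h
    rw [h, orderOf_one] at hi
    omega
  have hwpow_ne : ∀ k : ℕ, ¬ p ^ 2 ∣ k → w ^ k ≠ 1 := by
    intro k hk h
    exact hk (hi ▸ orderOf_dvd_iff_pow_eq_one.mpr h)
  -- conjugation formulas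
  have conjz : ∀ (g x : G) (z : ℤ), g * x ^ z * g⁻¹ = (g * x * g⁻¹) ^ z := fun g x z => by
    simpa using (map_zpow (MulAut.conj g) x z).symm
  have conj1 : ∀ n : ℕ, b * a ^ n * b⁻¹ = a ^ (i * n) := by
    intro n
    have h1 := map_pow (MulAut.conj b) a n
    simp only [MulAut.conj_apply] at h1
    rw [h1, hrel, ← pow_mul]
  have conjk : ∀ k n : ℕ, b ^ k * a ^ n * (b ^ k)⁻¹ = a ^ (i ^ k * n) := by
    intro k
    induction k with
    | zero => intro n; simp
    | succ k ih =>
      intro n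
      have h1 : b ^ (k + 1) * a ^ n * (b ^ (k + 1))⁻¹
          = b ^ k * (b * a ^ n * b⁻¹) * (b ^ k)⁻¹ := by
        rw [pow_succ]; group
      rw [h1, conj1, ih]
      congr 1
      ring
  -- the power formula
  have pf : ∀ e k m : ℕ, (a ^ e * b ^ k) ^ m
      = a ^ (e * ∑ t ∈ Finset.range m, i ^ (k * t)) * b ^ (k * m) := by
    intro e k m
    induction m with
    | zero => simp
    | succ m ih =>
      rw [pow_succ, ih]
      have h1 : a ^ (e * ∑ t ∈ Finset.range m, i ^ (k * t)) * b ^ (k * m) * (a ^ e * b ^ k)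
          = a ^ (e * ∑ t ∈ Finset.range m, i ^ (k * t))
            * (b ^ (k * m) * a ^ e * (b ^ (k * m))⁻¹) * (b ^ (k * m) * b ^ k) := by
        group
      rw [h1, conjk, ← pow_add, ← pow_add]
      have h2 : e * ∑ t ∈ Finset.range m, i ^ (k * t) + i ^ (k * m) * e
          = e * ∑ t ∈ Finset.range (m + 1), i ^ (k * t) := by
        rw [Finset.sum_range_succ]; ring
      have h3 : k * m + k = k * (m + 1) := by ring
      rw [h2, h3]
  set A := Subgroup.zpowers a with hA_def
  set B := Subgroup.zpowers b with hB_def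
  have hbinv : b⁻¹ = b ^ (p ^ 2 - 1) := by
    have h1 : b ^ (p ^ 2 - 1) * b = 1 := by
      rw [← pow_succ, Nat.sub_add_cancel hp2pos]; exact hb
    exact (eq_inv_of_mul_eq_one_left h1).symm
  have hAnormal : A.Normal := by
    rw [← Subgroup.normalizer_eq_top_iff, ← top_le_iff, ← hgen, Subgroup.closure_le,
      Set.insert_subset_iff, Set.singleton_subset_iff]
    constructor
    · exact Subgroup.le_normalizer (Subgroup.mem_zpowers a)
    · rw [SetLike.mem_coe, Subgroup.mem_normalizer_iff]
      intro h
      constructor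
      · intro hh
        obtain ⟨z, hz⟩ := Subgroup.mem_zpowers_iff.mp hh
        rw [← hz, conjz, hrel]
        exact Subgroup.mem_zpowers_iff.mpr ⟨i * z, by rw [zpow_mul, zpow_natCast]⟩
      · intro hh
        obtain ⟨z, hz⟩ := Subgroup.mem_zpowers_iff.mp hh
        have h2 : h = b⁻¹ * (b * h * b⁻¹) * b := by group
        rw [h2, ← hz]
        have h3 : b⁻¹ * a ^ z * b = (b⁻¹ * a * b) ^ z := by
          have := conjz b⁻¹ a z
          rwa [inv_inv] at this
        rw [h3]
        have h4 : b⁻¹ * a * b = a ^ (i ^ (p ^ 2 - 1)) := by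
          have h5 := conjk (p ^ 2 - 1) 1
          rw [pow_one, mul_one] at h5
          have h6 : (b ^ (p ^ 2 - 1))⁻¹ = b := by rw [← hbinv, inv_inv]
          rw [h6] at h5
          rw [hbinv]
          exact h5
        rw [h4]
        exact Subgroup.mem_zpowers_iff.mpr ⟨(i ^ (p ^ 2 - 1) : ℕ) * z,
          by rw [zpow_mul, zpow_natCast]⟩
  have hsup : A ⊔ B = ⊤ := by
    apply top_unique
    rw [← hgen, Subgroup.closure_le, Set.insert_subset_iff, Set.singleton_subset_iff]
    exact ⟨Subgroup.mem_sup_left (Subgroup.mem_zpowers a),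
      Subgroup.mem_sup_right (Subgroup.mem_zpowers b)⟩
  haveI := hAnormal
  have hsurj : ∀ g : G, ∃ m n : ℕ, g = a ^ m * b ^ n := by
    intro g
    have hg : g ∈ ((A : Set G) * (B : Set G)) := by
      rw [← Subgroup.normal_mul A B, hsup]
      exact Subgroup.mem_top g
    obtain ⟨x, hx, y, hy, hxy⟩ := hg
    obtain ⟨m, hm⟩ := (Submonoid.mem_powers_iff _ _).mp (mem_powers_iff_mem_zpowers.mpr hx)
    obtain ⟨n, hn⟩ := (Submonoid.mem_powers_iff _ _).mp (mem_powers_iff_mem_zpowers.mpr hy)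
    exact ⟨m, n, by rw [← hxy, ← hm, ← hn]⟩
  -- orders of a and b
  have hda : orderOf a ∣ q := orderOf_dvd_iff_pow_eq_one.mpr ha
  have hdb : orderOf b ∣ p ^ 2 := orderOf_dvd_iff_pow_eq_one.mpr hb
  have hle : Nat.card G ≤ orderOf a * orderOf b := by
    have hoa0 : 0 < orderOf a := orderOf_pos a
    have hob0 : 0 < orderOf b := orderOf_pos b
    have hsurj2 : Function.Surjective
        (fun mn : Fin (orderOf a) × Fin (orderOf b) => a ^ (mn.1 : ℕ) * b ^ (mn.2 : ℕ)) := by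
      intro g
      obtain ⟨m, n, rfl⟩ := hsurj g
      refine ⟨(⟨m % orderOf a, Nat.mod_lt _ hoa0⟩, ⟨n % orderOf b, Nat.mod_lt _ hob0⟩), ?_⟩
      simp only
      rw [pow_mod_orderOf, pow_mod_orderOf]
    calc Nat.card G ≤ Nat.card (Fin (orderOf a) × Fin (orderOf b)) :=
          Nat.card_le_card_of_surjective _ hsurj2
      _ = orderOf a * orderOf b := by simp
  have hoa : orderOf a = q := by
    rcases (Nat.Prime.eq_one_or_self_of_dvd hq _ hda) with h | h
    · exfalso
      rw [hcard, h, one_mul] at hle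
      have := Nat.le_of_dvd hp2pos hdb
      nlinarith
    · exact h
  have hob : orderOf b = p ^ 2 := by
    have h1 := Nat.le_of_dvd hp2pos hdb
    rw [hcard, hoa] at hle
    nlinarith
  -- unique normal form
  have hcop : Nat.Coprime q (p ^ 2) :=
    ((Nat.coprime_primes hq hp).mpr (by omega)).pow_right 2
  have nf : ∀ e₁ f₁ e₂ f₂ : ℕ, a ^ e₁ * b ^ f₁ = a ^ e₂ * b ^ f₂ →
      (e₁ : ZMod q) = (e₂ : ZMod q) ∧ (f₁ : ZMod (p ^ 2)) = (f₂ : ZMod (p ^ 2)) := by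
    intro e1 f1 e2 f2 h
    have hc : (a ^ e2)⁻¹ * a ^ e1 = b ^ f2 * (b ^ f1)⁻¹ := by
      calc (a ^ e2)⁻¹ * a ^ e1 = (a ^ e2)⁻¹ * (a ^ e1 * b ^ f1) * (b ^ f1)⁻¹ := by group
        _ = (a ^ e2)⁻¹ * (a ^ e2 * b ^ f2) * (b ^ f1)⁻¹ := by rw [h]
        _ = b ^ f2 * (b ^ f1)⁻¹ := by group
    set c := (a ^ e2)⁻¹ * a ^ e1 with hc_def
    have hcq : c ^ q = 1 := by
      have h1 : c = a ^ ((e1 : ℤ) - (e2 : ℤ)) := by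
        rw [hc_def, zpow_sub, zpow_natCast, zpow_natCast]; group
      rw [h1, ← zpow_natCast (a ^ ((e1 : ℤ) - e2)) q, ← zpow_mul, mul_comm, zpow_mul,
        zpow_natCast, ha, one_zpow]
    have hcp : c ^ (p ^ 2) = 1 := by
      have h1 : c = b ^ ((f2 : ℤ) - (f1 : ℤ)) := by
        rw [hc, zpow_sub, zpow_natCast, zpow_natCast]
      rw [h1, ← zpow_natCast (b ^ ((f2 : ℤ) - f1)) (p ^ 2), ← zpow_mul, mul_comm, zpow_mul,
        zpow_natCast, hb, one_zpow]
    have hc1 : c = 1 := by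
      have d1 : orderOf c ∣ q := orderOf_dvd_iff_pow_eq_one.mpr hcq
      have d2 : orderOf c ∣ p ^ 2 := orderOf_dvd_iff_pow_eq_one.mpr hcp
      have d3 : orderOf c ∣ Nat.gcd q (p ^ 2) := Nat.dvd_gcd d1 d2
      rw [Nat.Coprime.gcd_eq_one hcop] at d3
      exact orderOf_eq_one_iff.mp (Nat.dvd_one.mp d3)
    constructor
    · have h0 := hc1
      rw [hc_def] at h0
      have h1 : a ^ e1 = a ^ e2 := (inv_mul_eq_one.mp h0).symm
      rw [ZMod.natCast_eq_natCast_iff]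
      have h2 := pow_eq_pow_iff_modEq.mp h1
      rwa [hoa] at h2
    · have h0 := hc1
      rw [hc] at h0
      have h1 : b ^ f2 = b ^ f1 := mul_inv_eq_one.mp h0
      rw [ZMod.natCast_eq_natCast_iff]
      have h2 := pow_eq_pow_iff_modEq.mp h1
      rw [hob] at h2
      exact h2.symm
  -- basic pow-vanishing casts
  have apow : ∀ n : ℕ, a ^ n = 1 ↔ (n : ZMod q) = 0 := by
    intro n
    rw [← orderOf_dvd_iff_pow_eq_one, hoa, ZMod.natCast_eq_zero_iff]
  have bpow : ∀ n : ℕ, b ^ n = 1 ↔ (n : ZMod (p ^ 2)) = 0 := by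
    intro n
    rw [← orderOf_dvd_iff_pow_eq_one, hob, ZMod.natCast_eq_zero_iff]
  -- cast of the geometric sums
  have scast : ∀ k m : ℕ, ((∑ t ∈ Finset.range m, i ^ (k * t) : ℕ) : ZMod q)
      = ∑ t ∈ Finset.range m, (w ^ k) ^ t := by
    intro k m
    push_cast
    refine Finset.sum_congr rfl fun t _ => ?_
    rw [← pow_mul]
  -- order computations
  have ord_pq : ∀ e k : ℕ, ¬ p ∣ k → orderOf (a ^ e * b ^ k) = p ^ 2 := by
    intro e k hk
    have hwk : w ^ k ≠ 1 := hwpow_ne k (fun h => hk (dvd_trans (dvd_pow_self p two_ne_zero) h))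
    have hwk2 : (w ^ k) ^ (p ^ 2) = 1 := by
      rw [← pow_mul, mul_comm, pow_mul, hw2, one_pow]
    have hsum : ∑ t ∈ Finset.range (p ^ 2), (w ^ k) ^ t = 0 := geomZero _ _ hwk hwk2
    have h1 : (a ^ e * b ^ k) ^ (p ^ 2) = 1 := by
      rw [pf]
      have h2 : a ^ (e * ∑ t ∈ Finset.range (p ^ 2), i ^ (k * t)) = 1 := by
        rw [apow]
        push_cast [scast]
        rw [hsum, mul_zero]
      rw [h2, one_mul, bpow]
      exact (ZMod.natCast_eq_zero_iff _ _).mpr ⟨k, by ring⟩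
    have h2 : p ^ 2 ∣ orderOf (a ^ e * b ^ k) := by
      have h3 := pow_orderOf_eq_one (a ^ e * b ^ k)
      rw [pf] at h3
      have h4 := nf _ _ 0 0 (by simpa using h3)
      have h5 : p ^ 2 ∣ k * orderOf (a ^ e * b ^ k) := by
        have h6 := h4.2
        rwa [Nat.cast_mul, Nat.cast_zero, ← Nat.cast_mul,
          ZMod.natCast_eq_zero_iff] at h6
      have hck : Nat.Coprime (p ^ 2) k :=
        Nat.Coprime.pow_left 2 ((Nat.Prime.coprime_iff_not_dvd hp).mpr hk)
      exact (Nat.Coprime.dvd_of_dvd_mul_left hck h5)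
    exact Nat.dvd_antisymm (orderOf_dvd_iff_pow_eq_one.mpr h1) h2
  have ord_p : ∀ e k : ℕ, p ∣ k → ¬ p ^ 2 ∣ k → orderOf (a ^ e * b ^ k) = p := by
    intro e k hpk hp2k
    obtain ⟨l, rfl⟩ := hpk
    have hwk : w ^ (p * l) ≠ 1 := hwpow_ne _ hp2k
    have hwk2 : (w ^ (p * l)) ^ p = 1 := by
      rw [← pow_mul]
      have : p * l * p = p ^ 2 * l := by ring
      rw [this, pow_mul, hw2, one_pow]
    have hsum : ∑ t ∈ Finset.range p, (w ^ (p * l)) ^ t = 0 := geomZero _ _ hwk hwk2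
    have h1 : (a ^ e * b ^ (p * l)) ^ p = 1 := by
      rw [pf]
      have h2 : a ^ (e * ∑ t ∈ Finset.range p, i ^ (p * l * t)) = 1 := by
        rw [apow]
        push_cast [scast]
        rw [hsum, mul_zero]
      rw [h2, one_mul, bpow]
      exact (ZMod.natCast_eq_zero_iff _ _).mpr ⟨l, by ring⟩
    have h4 : orderOf (a ^ e * b ^ (p * l)) ∣ p := orderOf_dvd_iff_pow_eq_one.mpr h1
    rcases (Nat.Prime.eq_one_or_self_of_dvd hp _ h4) with h5 | h5
    · exfalso
      have h6 : a ^ e * b ^ (p * l) = 1 := orderOf_eq_one_iff.mp h5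
      have h7 := nf e (p * l) 0 0 (by simpa using h6)
      have h8 := h7.2
      rw [Nat.cast_zero, ZMod.natCast_eq_zero_iff] at h8
      exact hp2k h8
    · exact h5
  -- the classification map
  set F : (ZMod q ⊕ ZMod q) ⊕ Bool → Subgroup G := fun v =>
    match v with
    | .inl (.inl x) => Subgroup.zpowers (a ^ x.val * b)
    | .inl (.inr x) => Subgroup.zpowers (a ^ x.val * b ^ p)
    | .inr true => A
    | .inr false => ⊥
    with hF_def
  have hpd1 : ¬ p ∣ 1 := fun h => by
    have := Nat.le_of_dvd one_pos h; omega
  have hpdp : ¬ p ^ 2 ∣ p := fun h => by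
    have := Nat.le_of_dvd hp.pos h; nlinarith
  have cardF1 : ∀ x : ZMod q, Nat.card (F (.inl (.inl x))) = p ^ 2 := by
    intro x
    show Nat.card (Subgroup.zpowers (a ^ x.val * b)) = p ^ 2
    rw [Nat.card_zpowers]
    have := ord_pq x.val 1 hpd1
    rwa [pow_one] at this
  have cardF2 : ∀ x : ZMod q, Nat.card (F (.inl (.inr x))) = p := by
    intro x
    show Nat.card (Subgroup.zpowers (a ^ x.val * b ^ p)) = p
    rw [Nat.card_zpowers]
    exact ord_p x.val p dvd_rfl hpdp
  have cardFA : Nat.card (F (.inr true)) = q := by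
    show Nat.card A = q
    rw [hA_def, Nat.card_zpowers, hoa]
  have cardFbot : Nat.card (F (.inr false)) = 1 := by
    show Nat.card (⊥ : Subgroup G) = 1
    simp
  -- injectivity within the first family
  have inj1 : ∀ x y : ZMod q,
      Subgroup.zpowers (a ^ x.val * b) = Subgroup.zpowers (a ^ y.val * b) → x = y := by
    intro x y hxy
    have hmem : a ^ y.val * b ∈ Subgroup.zpowers (a ^ x.val * b) := by
      rw [hxy]; exact Subgroup.mem_zpowers _
    obtain ⟨n, hn⟩ := (Submonoid.mem_powers_iff _ _).mp (mem_powers_iff_mem_zpowers.mpr hmem)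
    rw [show a ^ x.val * b = a ^ x.val * b ^ 1 by rw [pow_one]] at hn
    rw [pf] at hn
    have h1 := nf (x.val * ∑ t ∈ Finset.range n, i ^ (1 * t)) (1 * n) y.val 1 (by rw [pow_one]; exact hn)
    have h2 : (n : ZMod (p ^ 2)) = 1 := by simpa using h1.2
    have h3 : n % p ^ 2 = 1 := by
      have := (ZMod.natCast_eq_natCast_iff' n 1 (p ^ 2)).mp (by simpa using h2)
      rwa [Nat.one_mod_eq_one.mpr (by omega)] at this
    have h4 : ((∑ t ∈ Finset.range n, i ^ (1 * t) : ℕ) : ZMod q) = 1 := by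
      rw [scast]
      rw [pow_one, geomMod w (p ^ 2) hwne hw2 n, h3]
      simp
    have h5 := h1.1
    rw [Nat.cast_mul, h4, mul_one] at h5
    have h6 : ((x.val : ℕ) : ZMod q) = x := ZMod.natCast_rightInverse x
    have h7 : ((y.val : ℕ) : ZMod q) = y := ZMod.natCast_rightInverse y
    rw [h6, h7] at h5
    exact h5
  -- injectivity within the second family
  have inj2 : ∀ x y : ZMod q,
      Subgroup.zpowers (a ^ x.val * b ^ p) = Subgroup.zpowers (a ^ y.val * b ^ p) → x = y := by
    intro x y hxy
    have hmem : a ^ y.val * b ^ p ∈ Subgroup.zpowers (a ^ x.val * b ^ p) := by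
      rw [hxy]; exact Subgroup.mem_zpowers _
    obtain ⟨n, hn⟩ := (Submonoid.mem_powers_iff _ _).mp (mem_powers_iff_mem_zpowers.mpr hmem)
    rw [pf] at hn
    have h1 := nf (x.val * ∑ t ∈ Finset.range n, i ^ (p * t)) (p * n) y.val p hn
    have h2 : ((p * n : ℕ) : ZMod (p ^ 2)) = (p : ZMod (p ^ 2)) := h1.2
    have h3 : p * n % p ^ 2 = p := by
      have := (ZMod.natCast_eq_natCast_iff' (p * n) p (p ^ 2)).mp h2
      rwa [Nat.mod_eq_of_lt (show p < p ^ 2 by nlinarith)] at this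
    -- deduce n % p = 1
    have h4 : n % p = 1 := by
      have h5 : p * n % (p * p) = p * (n % p) := by
        rw [Nat.mul_mod_mul_left]
      have h6 : p ^ 2 = p * p := by ring
      rw [h6, h5] at h3
      have := Nat.eq_of_mul_eq_mul_left hp.pos (h3.trans (mul_one p).symm)
      exact this
    have hsp : ∑ t ∈ Finset.range n, (w ^ p) ^ t = 1 := by
      have hwp1 : (w ^ p) ^ p = 1 := by
        rw [← pow_mul, ← pow_two, hw2]
      have hwpne : w ^ p ≠ 1 := hwpow_ne p hpdp
      rw [geomMod (w ^ p) p hwpne hwp1 n, h4]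
      simp
    have h7 : ((∑ t ∈ Finset.range n, i ^ (p * t) : ℕ) : ZMod q) = 1 := by
      rw [scast, hsp]
    have h5 := h1.1
    rw [Nat.cast_mul, h7, mul_one] at h5
    have h6 : ((x.val : ℕ) : ZMod q) = x := ZMod.natCast_rightInverse x
    have h8 : ((y.val : ℕ) : ZMod q) = y := ZMod.natCast_rightInverse y
    rw [h6, h8] at h5
    exact h5
  -- distinct cardinalities
  have hq_ne_p2 : q ≠ p ^ 2 := by
    intro h
    have h1 : p ∣ q := h ▸ dvd_pow_self p two_ne_zero
    have h2 : p = q := ((Nat.prime_dvd_prime_iff_eq hp hq).mp h1)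
    nlinarith
  have hq_ne_p : q ≠ p := by omega
  have hp2_ne_p : p ^ 2 ≠ p := by nlinarith
  have hFinj : Function.Injective F := by
    intro v1 v2 hv
    have hcard2 : Nat.card (F v1) = Nat.card (F v2) := by rw [hv]
    rcases v1 with (x | x) | bb <;> rcases v2 with (y | y) | cc
    · exact congrArg (fun z => Sum.inl (Sum.inl z)) (inj1 x y hv)
    · rw [cardF1 x, cardF2 y] at hcard2; exact absurd hcard2 hp2_ne_p
    · rcases cc
      · rw [cardF1 x, cardFbot] at hcard2; omega
      · rw [cardF1 x, cardFA] at hcard2; exact absurd hcard2.symm hq_ne_p2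
    · rw [cardF2 x, cardF1 y] at hcard2; exact absurd hcard2.symm hp2_ne_p
    · exact congrArg (fun z => Sum.inl (Sum.inr z)) (inj2 x y hv)
    · rcases cc
      · rw [cardF2 x, cardFbot] at hcard2; omega
      · rw [cardF2 x, cardFA] at hcard2; exact absurd hcard2.symm hq_ne_p
    · rcases bb
      · rw [cardFbot, cardF1 y] at hcard2; omega
      · rw [cardFA, cardF1 y] at hcard2; exact absurd hcard2 hq_ne_p2
    · rcases bb
      · rw [cardFbot, cardF2 y] at hcard2; omega
      · rw [cardFA, cardF2 y] at hcard2; exact absurd hcard2 hq_ne_p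
    · rcases bb <;> rcases cc
      · rfl
      · rw [cardFbot, cardFA] at hcard2; omega
      · rw [cardFA, cardFbot] at hcard2; omega
      · rfl
  -- coverage
  have hval_pow : ∀ e : ℕ, a ^ ((e : ZMod q)).val = a ^ e := by
    intro e
    apply powEqOfMod a q _ _ ha
    rw [ZMod.val_natCast, Nat.mod_mod_of_dvd _ dvd_rfl]
  have hcov : {H : Subgroup G | IsCyclic H} = Set.range F := by
    ext H
    simp only [Set.mem_setOf_eq, Set.mem_range]
    constructor
    · intro hH
      obtain ⟨g, rfl⟩ := cyclicEqZpowers hH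
      obtain ⟨m, n, rfl⟩ := hsurj g
      obtain ⟨k, hk_def⟩ : ∃ k, k = n % p ^ 2 := ⟨_, rfl⟩
      have hbk : b ^ n = b ^ k := powEqOfMod b (p ^ 2) n k hb
        (by rw [hk_def, Nat.mod_mod_of_dvd _ dvd_rfl])
      have hk_lt : k < p ^ 2 := by rw [hk_def]; exact Nat.mod_lt _ hp2pos
      rw [hbk]
      by_cases hk0 : k = 0
      · subst hk0
        rw [pow_zero, mul_one]
        by_cases ham : a ^ m = 1
        · exact ⟨.inr false, by
            show (⊥ : Subgroup G) = _
            rw [ham, Subgroup.zpowers_one_eq_bot]⟩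
        · refine ⟨.inr true, ?_⟩
          show A = Subgroup.zpowers (a ^ m)
          have h1 : Subgroup.zpowers (a ^ m) ≤ A :=
            Subgroup.zpowers_le.mpr (Subgroup.pow_mem _ (Subgroup.mem_zpowers a) m)
          have h2 : orderOf (a ^ m) = q := by
            have d1 : orderOf (a ^ m) ∣ q :=
              orderOf_dvd_iff_pow_eq_one.mpr (by rw [← pow_mul, mul_comm, pow_mul, ha, one_pow])
            rcases (Nat.Prime.eq_one_or_self_of_dvd hq _ d1) with h | h
            · exact absurd (orderOf_eq_one_iff.mp h) ham
            · exact h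
          exact (subgroupEq h1 (by simp only [hA_def, Nat.card_zpowers, hoa, h2]; exact le_rfl)).symm
      · by_cases hpk : p ∣ k
        · -- order p case
          have hp2k : ¬ p ^ 2 ∣ k := fun h => by
            have := Nat.le_of_dvd (Nat.pos_of_ne_zero hk0) h; omega
          obtain ⟨l, rfl⟩ := hpk
          have hordg : orderOf (a ^ m * b ^ (p * l)) = p := ord_p m (p * l) ⟨l, rfl⟩ hp2k
          have hl0 : l ≠ 0 := fun h => hk0 (by rw [h, mul_zero])
          have hllt : l < p := by nlinarith [Nat.lt_of_mul_lt_mul_left (a := p) (by nlinarith [hk_lt] : p * l < p * p)]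
          have hlp : ¬ p ∣ l := fun h => by
            have := Nat.le_of_dvd (Nat.pos_of_ne_zero hl0) h; omega
          -- invert l mod p
          have hlz : (l : ZMod p) ≠ 0 := fun h =>
            hlp ((ZMod.natCast_eq_zero_iff l p).mp h)
          set u := ((l : ZMod p)⁻¹).val with hu_def
          have hu : l * u % p = 1 := by
            have h1 : (l : ZMod p) * ((l : ZMod p)⁻¹) = 1 := ZMod.mul_inv_of_unit _
              (ZMod.isUnit_iff_coprime l p |>.mpr ?hc)
            case hc => exact (Nat.Prime.coprime_iff_not_dvd hp).mpr hlp |>.symm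
            have h2 : ((l * u : ℕ) : ZMod p) = ((1 : ℕ) : ZMod p) := by
              push_cast [hu_def]
              rw [ZMod.natCast_val, ZMod.cast_id, h1]
            have h3 := (ZMod.natCast_eq_natCast_iff' _ _ _).mp h2
            rwa [Nat.one_mod_eq_one.mpr (by omega)] at h3
          have hlu : l * u = p * (l * u / p) + 1 := by
            conv_lhs => rw [← Nat.div_add_mod (l * u) p]
            rw [hu]
          have hblu : b ^ (p * l * u) = b ^ p := by
            apply powEqOfMod b (p ^ 2) _ _ hb
            have h1 : p * l * u = p + p ^ 2 * (l * u / p) := by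
              calc p * l * u = p * (l * u) := by ring
                _ = p * (p * (l * u / p) + 1) := by rw [← hlu]
                _ = p + p ^ 2 * (l * u / p) := by ring
            rw [h1, Nat.add_mul_mod_self_left]
          have hgu := pf m (p * l) u
          rw [hblu] at hgu
          set e' := m * ∑ t ∈ Finset.range u, i ^ (p * l * t) with he'_def
          refine ⟨.inl (.inr ((e' : ZMod q))), ?_⟩
          show Subgroup.zpowers (a ^ ((e' : ZMod q)).val * b ^ p) = _
          rw [hval_pow e', ← hgu]
          apply subgroupEq
          · exact Subgroup.zpowers_le.mpr (Subgroup.pow_mem _ (Subgroup.mem_zpowers _) u)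
          · rw [Nat.card_zpowers, Nat.card_zpowers, hordg, hgu]
            rw [ord_p e' p dvd_rfl hpdp]
        · -- order p^2 case
          have hordg : orderOf (a ^ m * b ^ k) = p ^ 2 := ord_pq m k hpk
          have hck : Nat.Coprime k (p ^ 2) :=
            (((Nat.Prime.coprime_iff_not_dvd hp).mpr hpk).symm).pow_right 2
          set vu : ZMod (p ^ 2) := (↑((ZMod.unitOfCoprime k hck)⁻¹) : ZMod (p ^ 2)) with hvu_def
          set u := vu.val with hu_def
          have hku : k * u % p ^ 2 = 1 := by
            have h1 : (k : ZMod (p ^ 2)) * vu = 1 := by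
              rw [← ZMod.coe_unitOfCoprime k hck, hvu_def]
              exact_mod_cast (ZMod.unitOfCoprime k hck).mul_inv
            have h2 : ((k * u : ℕ) : ZMod (p ^ 2)) = ((1 : ℕ) : ZMod (p ^ 2)) := by
              push_cast [hu_def]
              rw [ZMod.natCast_val, ZMod.cast_id, h1]
            have h3 := (ZMod.natCast_eq_natCast_iff' _ _ _).mp h2
            rwa [Nat.one_mod_eq_one.mpr (by omega)] at h3
          have hbku : b ^ (k * u) = b ^ 1 := by
            apply powEqOfMod b (p ^ 2) _ _ hb
            rw [hku, Nat.one_mod_eq_one.mpr (by omega)]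
          have hgu := pf m k u
          rw [hbku, pow_one] at hgu
          set e' := m * ∑ t ∈ Finset.range u, i ^ (k * t) with he'_def
          refine ⟨.inl (.inl ((e' : ZMod q))), ?_⟩
          show Subgroup.zpowers (a ^ ((e' : ZMod q)).val * b) = _
          rw [hval_pow e', ← hgu]
          apply subgroupEq
          · exact Subgroup.zpowers_le.mpr (Subgroup.pow_mem _ (Subgroup.mem_zpowers _) u)
          · rw [Nat.card_zpowers, Nat.card_zpowers, hordg, hgu]
            have := ord_pq e' 1 hpd1
            rw [pow_one] at this
            rw [this]
    · rintro ⟨v, rfl⟩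
      rcases v with (x | x) | bb
      · exact isCyclicZpowers _
      · exact isCyclicZpowers _
      · rcases bb
        · exact Bot.isCyclic
        · exact isCyclicZpowers a
  -- conclude
  have hnum : numCyclic G = Nat.card (Set.range F) := by
    rw [numCyclic]
    exact Nat.card_congr (Equiv.setCongr hcov)
  rw [hnum, Nat.card_range_of_injective hFinj]
  rw [Nat.card_sum, Nat.card_sum, Nat.card_zmod]
  simp
  ring
end

section
/- In the semidirect product G = Z_q ⋊ Z_{p²} with bab^{-1} = a^i where ord_q(i) = p², the element a^m b^n (with 1 ≤ n < p²) has order p if and only if p divides n, and G has exactly (p-1)q elements of order p. -/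
/-- In `G = Z_q ⋊ Z_{p²}` with `b a b⁻¹ = a^i` where `ord_q i = p²`, an element
`a^m * b^n` with `1 ≤ n < p²` has order `p` iff `p ∣ n`, and `G` has exactly
`(p-1) * q` elements of order `p`. -/
theorem stmt_9 (G : Type*) [Group G] [Finite G] (p q i : ℕ) (hp : p.Prime) (hq : q.Prime)
    (hpq : p < q) (hi : orderOf (i : ZMod q) = p ^ 2)
    (a b : G) (ha : a ^ q = 1) (hb : b ^ (p ^ 2) = 1) (hrel : b * a * b⁻¹ = a ^ i)
    (hgen : Subgroup.closure {a, b} = ⊤) (hcard : Nat.card G = q * p ^ 2) :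
    (∀ m n : ℕ, 1 ≤ n → n < p ^ 2 → (orderOf (a ^ m * b ^ n) = p ↔ p ∣ n)) ∧
      Nat.card {g : G // orderOf g = p} = (p - 1) * q := by
  haveI := Fact.mk hp
  haveI := Fact.mk hq
  have hp0 : 0 < p := hp.pos
  have hq0 : 0 < q := hq.pos
  have hp2 : 1 < p := hp.one_lt
  -- conjugation formula
  have hconj : ∀ k : ℕ, b ^ k * a * (b ^ k)⁻¹ = a ^ (i ^ k) := by
    intro k
    induction k with
    | zero => simp
    | succ k ih =>
      have h1 : b ^ (k + 1) * a * (b ^ (k + 1))⁻¹ = b * (b ^ k * a * (b ^ k)⁻¹) * b⁻¹ := by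
        group
      rw [h1, ih, ← conj_pow, hrel, ← pow_mul, pow_succ, mul_comm]
  have hmove : ∀ n m : ℕ, b ^ n * a ^ m = a ^ (i ^ n * m) * b ^ n := by
    intro n m
    have h1 : b ^ n * a ^ m * (b ^ n)⁻¹ = a ^ (i ^ n * m) := by
      rw [← conj_pow, hconj n, ← pow_mul]
    rw [← h1]; group
  -- power formula
  have hpow : ∀ m n k : ℕ, (a ^ m * b ^ n) ^ k =
      a ^ (m * ∑ j ∈ Finset.range k, i ^ (n * j)) * b ^ (n * k) := by
    intro m n k
    induction k with
    | zero => simp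
    | succ k ih =>
      have e1 : m * (∑ j ∈ Finset.range (k + 1), i ^ (n * j)) =
          m * (∑ j ∈ Finset.range k, i ^ (n * j)) + i ^ (n * k) * m := by
        rw [Finset.sum_range_succ]; ring
      have e2 : n * (k + 1) = n * k + n := by ring
      rw [pow_succ, ih, e1, e2, pow_add, pow_add]
      calc a ^ (m * ∑ j ∈ Finset.range k, i ^ (n * j)) * b ^ (n * k) * (a ^ m * b ^ n)
          = a ^ (m * ∑ j ∈ Finset.range k, i ^ (n * j)) * (b ^ (n * k) * a ^ m) * b ^ n := by
            group
        _ = a ^ (m * ∑ j ∈ Finset.range k, i ^ (n * j)) *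
              (a ^ (i ^ (n * k) * m) * b ^ (n * k)) * b ^ n := by rw [hmove]
        _ = _ := by group
  -- trivial intersection
  have htriv : ∀ g : G, g ^ q = 1 → g ^ (p ^ 2) = 1 → g = 1 := by
    intro g h1 h2
    have hd1 : orderOf g ∣ q := orderOf_dvd_of_pow_eq_one h1
    have hd2 : orderOf g ∣ p ^ 2 := orderOf_dvd_of_pow_eq_one h2
    have hcop : Nat.Coprime q (p ^ 2) :=
      Nat.Coprime.pow_right _ ((Nat.coprime_primes hq hp).mpr (fun h => by omega))
    have hgcd : orderOf g ∣ Nat.gcd q (p ^ 2) := Nat.dvd_gcd hd1 hd2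
    rw [hcop] at hgcd
    exact orderOf_eq_one_iff.mp (Nat.dvd_one.mp hgcd)
  have htriv2 : ∀ m n : ℕ, a ^ m * b ^ n = 1 → a ^ m = 1 ∧ b ^ n = 1 := by
    intro m n h
    have hg : a ^ m = (b ^ n)⁻¹ := eq_inv_of_mul_eq_one_left h
    have h1 : (a ^ m) ^ q = 1 := by
      rw [← pow_mul, mul_comm, pow_mul, ha, one_pow]
    have h2 : (a ^ m) ^ (p ^ 2) = 1 := by
      rw [hg, inv_pow, ← pow_mul, mul_comm, pow_mul, hb, one_pow, inv_one]
    have h3 := htriv _ h1 h2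
    exact ⟨h3, by rw [← h, h3, one_mul]⟩
  -- order of a
  have horda : orderOf a = q := by
    have hda : orderOf a ∣ q := orderOf_dvd_of_pow_eq_one ha
    rcases (Nat.Prime.eq_one_or_self_of_dvd hq _ hda) with h1 | h1
    · exfalso
      have ha1 : a = 1 := orderOf_eq_one_iff.mp h1
      have htop : (⊤ : Subgroup G) ≤ Subgroup.zpowers b := by
        rw [← hgen, Subgroup.closure_le]
        intro x hx
        simp only [Set.mem_insert_iff, Set.mem_singleton_iff] at hx
        rcases hx with rfl | rfl
        · rw [ha1]; exact Subgroup.one_mem _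
        · exact Subgroup.mem_zpowers _
      have heq : Subgroup.zpowers b = ⊤ := le_antisymm le_top htop
      have hbo : orderOf b = q * p ^ 2 := by
        rw [← Nat.card_zpowers, heq, ← hcard]
        exact Nat.card_congr Subgroup.topEquiv.toEquiv
      have hdb : orderOf b ∣ p ^ 2 := orderOf_dvd_of_pow_eq_one hb
      rw [hbo] at hdb
      have hle := Nat.le_of_dvd (by positivity) hdb
      nlinarith
    · exact h1
  -- order of b
  have hordb : orderOf b = p ^ 2 := by
    have hdb : orderOf b ∣ p ^ 2 := orderOf_dvd_of_pow_eq_one hb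
    refine Nat.dvd_antisymm hdb ?_
    set d := orderOf b with hd
    have hbd : b ^ d = 1 := pow_orderOf_eq_one b
    have h1 : a ^ (i ^ d) = a := by
      rw [← hconj d, hbd]; group
    have h2 : a ^ (((i ^ d : ℕ) : ℤ) - 1) = 1 := by
      rw [zpow_sub, zpow_one, zpow_natCast, h1]
      simp
    have h3 : ((q : ℤ)) ∣ ((i ^ d : ℕ) : ℤ) - 1 := by
      rw [← horda]; exact orderOf_dvd_iff_zpow_eq_one.mpr h2
    have h4 : ((i : ZMod q)) ^ d = 1 := by
      have h5 : ((((i ^ d : ℕ) : ℤ) - 1 : ℤ) : ZMod q) = 0 := by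
        rw [ZMod.intCast_zmod_eq_zero_iff_dvd]
        exact h3
      push_cast at h5
      linear_combination h5
    rw [← hi]
    exact orderOf_dvd_iff_pow_eq_one.mpr h4
  -- geometric sum divisibility
  have hsum : ∀ n : ℕ, 0 < n → n < p ^ 2 → p ∣ n →
      q ∣ ∑ j ∈ Finset.range p, i ^ (n * j) := by
    intro n hn1 hn2 hdvd
    set x : ZMod q := (i : ZMod q) ^ n with hx
    have hx1 : x ≠ 1 := by
      intro h
      have h2 : orderOf (i : ZMod q) ∣ n := orderOf_dvd_iff_pow_eq_one.mpr h
      rw [hi] at h2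
      exact absurd (Nat.le_of_dvd hn1 h2) (by omega)
    have hxp : x ^ p = 1 := by
      obtain ⟨s, rfl⟩ := hdvd
      have e : p * s * p = p ^ 2 * s := by ring
      rw [hx, ← pow_mul, e, pow_mul, ← hi, pow_orderOf_eq_one, one_pow]
    have hgeo : (∑ j ∈ Finset.range p, x ^ j) * (x - 1) = 0 := by
      rw [geom_sum_mul, hxp, sub_self]
    have hsum0 : (∑ j ∈ Finset.range p, x ^ j) = 0 := by
      rcases mul_eq_zero.mp hgeo with h | h
      · exact h
      · exact absurd (sub_eq_zero.mp h) hx1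
    have hcast : ((∑ j ∈ Finset.range p, i ^ (n * j) : ℕ) : ZMod q) = 0 := by
      push_cast
      rw [← hsum0]
      exact Finset.sum_congr rfl fun j _ => by rw [hx, ← pow_mul]
    exact (ZMod.natCast_eq_zero_iff _ _).mp hcast
  -- non-vanishing
  have hne : ∀ m n : ℕ, 1 ≤ n → n < p ^ 2 → a ^ m * b ^ n ≠ 1 := by
    intro m n h1 h2 h
    have h3 := (htriv2 m n h).2
    have hd : p ^ 2 ∣ n := hordb ▸ orderOf_dvd_of_pow_eq_one h3
    exact absurd (Nat.le_of_dvd (by omega) hd) (by omega)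
  -- main characterization
  have hiff : ∀ m n : ℕ, 1 ≤ n → n < p ^ 2 → (orderOf (a ^ m * b ^ n) = p ↔ p ∣ n) := by
    intro m n h1 h2
    constructor
    · intro h
      have hpow1 : (a ^ m * b ^ n) ^ p = 1 := by rw [← h]; exact pow_orderOf_eq_one _
      rw [hpow m n p] at hpow1
      have hbnp := (htriv2 _ _ hpow1).2
      have hd : p ^ 2 ∣ n * p := hordb ▸ orderOf_dvd_of_pow_eq_one hbnp
      rw [pow_two] at hd
      exact (Nat.mul_dvd_mul_iff_right hp0).mp hd
    · intro hdvd
      have hS : q ∣ ∑ j ∈ Finset.range p, i ^ (n * j) := hsum n (by omega) h2 hdvd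
      have hA : a ^ (m * ∑ j ∈ Finset.range p, i ^ (n * j)) = 1 := by
        apply orderOf_dvd_iff_pow_eq_one.mp
        rw [horda]
        exact Dvd.dvd.mul_left hS m
      have hB : b ^ (n * p) = 1 := by
        apply orderOf_dvd_iff_pow_eq_one.mp
        rw [hordb, pow_two]
        exact Nat.mul_dvd_mul_right hdvd p
      have hp1 : (a ^ m * b ^ n) ^ p = 1 := by
        rw [hpow m n p, hA, hB, one_mul]
      exact orderOf_eq_prime hp1 (hne m n h1 h2)
  refine ⟨hiff, ?_⟩
  -- counting
  set φ : Fin q × Fin (p ^ 2) → G := fun x => a ^ (x.1 : ℕ) * b ^ (x.2 : ℕ) with hφ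
  have hinj : Function.Injective φ := by
    rintro ⟨m1, n1⟩ ⟨m2, n2⟩ hEq
    simp only [hφ] at hEq
    have ha' : a ^ (m1 : ℕ) = a ^ (m2 : ℕ) * b ^ (n2 : ℕ) * (b ^ (n1 : ℕ))⁻¹ :=
      eq_mul_inv_of_mul_eq hEq
    have key : a ^ ((m1 : ℤ) - (m2 : ℤ)) = b ^ ((n2 : ℤ) - (n1 : ℤ)) := by
      rw [zpow_sub, zpow_sub, zpow_natCast, zpow_natCast, zpow_natCast, zpow_natCast]
      have hc : Commute (a ^ (m2 : ℕ)) (b ^ (n2 : ℕ) * (b ^ (n1 : ℕ))⁻¹) := by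
        have hthis : b ^ (n2 : ℕ) * (b ^ (n1 : ℕ))⁻¹ = (a ^ (m2 : ℕ))⁻¹ * a ^ (m1 : ℕ) := by
          rw [ha']; group
        rw [hthis]
        exact ((Commute.refl a).pow_pow _ _).inv_right.mul_right
          ((Commute.refl a).pow_pow _ _)
      have h7 : a ^ (m1 : ℕ) * (a ^ (m2 : ℕ))⁻¹ =
          a ^ (m2 : ℕ) * (b ^ (n2 : ℕ) * (b ^ (n1 : ℕ))⁻¹) * (a ^ (m2 : ℕ))⁻¹ := by
        rw [ha']; group
      rw [h7, hc.eq]; group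
    have hgq : (a ^ ((m1 : ℤ) - (m2 : ℤ))) ^ q = 1 := by
      rw [← zpow_natCast (a ^ ((m1 : ℤ) - (m2 : ℤ))) q, ← zpow_mul, mul_comm, zpow_mul,
        zpow_natCast, ha, one_zpow]
    have hgp : (a ^ ((m1 : ℤ) - (m2 : ℤ))) ^ (p ^ 2) = 1 := by
      rw [key, ← zpow_natCast (b ^ ((n2 : ℤ) - (n1 : ℤ))) (p ^ 2), ← zpow_mul, mul_comm,
        zpow_mul, zpow_natCast, hb, one_zpow]
    have hg1 : a ^ ((m1 : ℤ) - (m2 : ℤ)) = 1 := htriv _ hgq hgp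
    have hg2 : b ^ ((n2 : ℤ) - (n1 : ℤ)) = 1 := key ▸ hg1
    have hdm : ((q : ℤ)) ∣ (m1 : ℤ) - (m2 : ℤ) := by
      have hx := orderOf_dvd_iff_zpow_eq_one.mpr hg1
      rwa [horda] at hx
    have hdn : ((p ^ 2 : ℕ) : ℤ) ∣ (n2 : ℤ) - (n1 : ℤ) := by
      have hx := orderOf_dvd_iff_zpow_eq_one.mpr hg2
      rwa [hordb] at hx
    have hm : m1 = m2 := by
      have h1 : (m1 : ℤ) - (m2 : ℤ) = 0 := by
        apply Int.eq_zero_of_abs_lt_dvd hdm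
        have hl1 := m1.isLt; have hl2 := m2.isLt
        rw [abs_lt]; omega
      exact Fin.ext (by omega)
    have hn' : n1 = n2 := by
      have h1 : (n2 : ℤ) - (n1 : ℤ) = 0 := by
        apply Int.eq_zero_of_abs_lt_dvd hdn
        have hl1 := n1.isLt; have hl2 := n2.isLt
        rw [abs_lt]; omega
      exact Fin.ext (by omega)
    rw [hm, hn']
  haveI : Fintype G := Fintype.ofFinite G
  have hcards : Fintype.card (Fin q × Fin (p ^ 2)) = Fintype.card G := by
    rw [Fintype.card_prod, Fintype.card_fin, Fintype.card_fin, ← Nat.card_eq_fintype_card,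
      hcard]
  have hbij : Function.Bijective φ :=
    (Fintype.bijective_iff_injective_and_card φ).mpr ⟨hinj, hcards⟩
  set e : (Fin q × Fin (p ^ 2)) ≃ G := Equiv.ofBijective φ hbij with he
  -- characterization on pairs
  have hchar : ∀ x : Fin q × Fin (p ^ 2),
      orderOf (φ x) = p ↔ (p ∣ (x.2 : ℕ) ∧ (x.2 : ℕ) ≠ 0) := by
    rintro ⟨m, n⟩
    rcases Nat.eq_zero_or_pos (n : ℕ) with h0 | h0
    · simp only [hφ, h0, pow_zero, mul_one]
      constructor
      · intro h
        exfalso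
        have hd : orderOf (a ^ (m : ℕ)) ∣ q := by
          have hx := orderOf_pow_dvd (x := a) (m : ℕ)
          rwa [horda] at hx
        rw [h] at hd
        have h2 := (Nat.prime_dvd_prime_iff_eq hp hq).mp hd
        omega
      · rintro ⟨-, h⟩; exact absurd rfl h
    · simp only [hφ]
      rw [hiff (m : ℕ) (n : ℕ) h0 n.isLt]
      constructor
      · intro h; exact ⟨h, by omega⟩
      · rintro ⟨h, -⟩; exact h
  -- transfer the count
  have step1 : Nat.card {g : G // orderOf g = p} =
      Nat.card {x : Fin q × Fin (p ^ 2) // p ∣ (x.2 : ℕ) ∧ (x.2 : ℕ) ≠ 0} := by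
    apply Nat.card_congr
    refine Equiv.subtypeEquiv e.symm fun g => ?_
    have h1 : φ (e.symm g) = g := e.apply_symm_apply g
    rw [← hchar (e.symm g), h1]
  rw [step1]
  -- split the product
  have step2 : Nat.card {x : Fin q × Fin (p ^ 2) // p ∣ (x.2 : ℕ) ∧ (x.2 : ℕ) ≠ 0} =
      Nat.card (Fin q × {n : Fin (p ^ 2) // p ∣ (n : ℕ) ∧ (n : ℕ) ≠ 0}) := by
    apply Nat.card_congr
    exact ⟨fun x => (x.1.1, ⟨x.1.2, x.2⟩), fun y => ⟨(y.1, y.2.1), y.2.2⟩,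
      fun x => rfl, fun y => rfl⟩
  rw [step2, Nat.card_prod]
  -- count the second factor
  have step3 : Nat.card {n : Fin (p ^ 2) // p ∣ (n : ℕ) ∧ (n : ℕ) ≠ 0} = p - 1 := by
    have hE : {n : Fin (p ^ 2) // p ∣ (n : ℕ) ∧ (n : ℕ) ≠ 0} ≃ Fin (p - 1) := by
      refine ⟨fun n => ⟨(n.1 : ℕ) / p - 1, ?_⟩, fun k => ⟨⟨p * ((k : ℕ) + 1), ?_⟩, ?_, ?_⟩,
        ?_, ?_⟩
      · obtain ⟨⟨nv, hnv⟩, hd, hne0⟩ := n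
        have hd' : p ∣ nv := hd
        have hne0' : nv ≠ 0 := hne0
        have h1 : 1 ≤ nv / p := (Nat.one_le_div_iff hp0).mpr (Nat.le_of_dvd (by omega) hd')
        have h2 : nv / p < p := by
          rw [Nat.div_lt_iff_lt_mul hp0, ← pow_two]
          exact hnv
        simp only
        omega
      · have hk := k.isLt
        have h1 : (k : ℕ) + 1 < p := by omega
        calc p * ((k : ℕ) + 1) < p * p := mul_lt_mul_of_pos_left h1 hp0
          _ = p ^ 2 := (sq p).symm
      · exact Dvd.intro _ rfl
      · positivity
      · rintro ⟨⟨nv, hnv⟩, hd, hne0⟩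
        have hd' : p ∣ nv := hd
        have hne0' : nv ≠ 0 := hne0
        have h1 : 1 ≤ nv / p := (Nat.one_le_div_iff hp0).mpr (Nat.le_of_dvd (by omega) hd')
        have h2 : p * (nv / p) = nv := Nat.mul_div_cancel' hd'
        apply Subtype.ext
        apply Fin.ext
        show p * (nv / p - 1 + 1) = nv
        rw [Nat.sub_add_cancel h1, h2]
      · intro k
        apply Fin.ext
        show p * ((k : ℕ) + 1) / p - 1 = (k : ℕ)
        rw [Nat.mul_div_cancel_left _ hp0]
        omega
    rw [Nat.card_congr hE, Nat.card_eq_fintype_card, Fintype.card_fin]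
  rw [step3, Nat.card_eq_fintype_card, Fintype.card_fin, Nat.mul_comm]
end

section
/- If G is a finite group of order p²q with p < q primes for which the converse of Lagrange's theorem fails (i.e., there exists a divisor d of |G| such that G has no subgroup of order d), then G ≅ A₄. -/
open Subgroup Pointwise

section Aux
variable {G : Type*} [Group G] [Finite G]

lemma aux_sup_card {H K : Subgroup G} [K.Normal]
    (h : Nat.Coprime (Nat.card H) (Nat.card K)) :
    Nat.card ↥(H ⊔ K) = Nat.card H * Nat.card K := by
  have hle : Nat.card ↥(H ⊔ K) ≤ Nat.card H * Nat.card K := by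
    have : ((H ⊔ K : Subgroup G) : Set G) = (H : Set G) * (K : Set G) :=
      Subgroup.mul_normal H K
    calc Nat.card ↥(H ⊔ K) = Nat.card ((H : Set G) * (K : Set G)) := by rw [← this]; rfl
      _ ≤ Nat.card (H : Set G) * Nat.card (K : Set G) := Set.natCard_mul_le
      _ = Nat.card H * Nat.card K := rfl
  have hd : Nat.card H * Nat.card K ∣ Nat.card ↥(H ⊔ K) :=
    Nat.Coprime.mul_dvd_of_dvd_of_dvd h (card_dvd_of_le le_sup_left)
      (card_dvd_of_le le_sup_right)
  exact le_antisymm hle (Nat.le_of_dvd Nat.card_pos hd)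

lemma aux_eq_of_le_card {H K : Subgroup G} (h : H ≤ K) (hc : Nat.card K ≤ Nat.card H) :
    H = K := by
  apply SetLike.coe_injective
  refine Set.eq_of_subset_of_ncard_le h ?_ (Set.toFinite _)
  rwa [← Nat.card_coe_set_eq, ← Nat.card_coe_set_eq]

end Aux

/-- `Equiv.permCongr` as a `MulEquiv`. -/
def permMulEquiv {α β : Type*} (e : α ≃ β) : Equiv.Perm α ≃* Equiv.Perm β :=
  { e.permCongr with
    map_mul' := fun p q => Equiv.ext fun x => by
      simp [Equiv.permCongr_apply, Equiv.Perm.mul_apply] }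

/-- If `G` has order `p² * q` with `p < q` primes and the converse of Lagrange's theorem
fails for `G`, then `G ≅ A₄`. -/
theorem stmt_11 (G : Type*) [Group G] [Finite G] (p q : ℕ) (hp : p.Prime) (hq : q.Prime)
    (hpq : p < q) (hcard : Nat.card G = p ^ 2 * q)
    (hfail : ∃ d : ℕ, d ∣ Nat.card G ∧ ∀ H : Subgroup G, Nat.card H ≠ d) :
    Nonempty (G ≃* alternatingGroup (Fin 4)) := by
  haveI : Fact p.Prime := ⟨hp⟩
  haveI : Fact q.Prime := ⟨hq⟩
  have hppos : 0 < p := hp.pos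
  have hp2 : 2 ≤ p := hp.two_le
  have hq2 : 2 ≤ q := hq.two_le
  have hpqne : p ≠ q := hpq.ne
  have hcop : Nat.Coprime p q := (Nat.coprime_primes hp hq).mpr hpqne
  -- Step 0: subgroups of prime-power order exist
  have hpdvd : ∀ n : ℕ, p ^ n ∣ Nat.card G → ∃ H : Subgroup G, Nat.card H = p ^ n :=
    fun n hn => Sylow.exists_subgroup_card_pow_prime p hn
  have hqsub : ∃ H : Subgroup G, Nat.card H = q := by
    obtain ⟨H, hH⟩ := Sylow.exists_subgroup_card_pow_prime (G := G) q (n := 1)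
      (by rw [hcard, pow_one]; exact dvd_mul_left q (p ^ 2))
    exact ⟨H, by rwa [pow_one] at hH⟩
  -- Step 1: the failing divisor must be p * q
  obtain ⟨d, hdvd, hno⟩ := hfail
  have hd : d = p * q := by
    rw [hcard] at hdvd
    obtain ⟨a, b, ha, hb, hab⟩ := Nat.dvd_mul.mp hdvd
    replace hab := hab.symm
    obtain ⟨i, hi, rfl⟩ := (Nat.dvd_prime_pow hp).mp ha
    rcases (Nat.dvd_prime hq).mp hb with rfl | rfl
    · -- b = 1, d = p ^ i : subgroup exists
      exfalso
      obtain ⟨H, hH⟩ := hpdvd i (by rw [hcard]; exact dvd_mul_of_dvd_left (pow_dvd_pow p hi) q)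
      exact hno H (by rw [hH, hab, mul_one])
    · interval_cases i
      · -- d = q
        exfalso
        obtain ⟨H, hH⟩ := hqsub
        exact hno H (by rw [hH, hab, pow_zero, one_mul])
      · rw [hab, pow_one]
      · -- d = p^2 * q = card G
        exfalso
        exact hno ⊤ (by rw [Subgroup.card_top, hcard, hab])
  subst hd
  -- no subgroup of order p * q; in particular no normal Sylow q-subgroup
  have hnoq : ∀ K : Subgroup G, Nat.card K = q → ¬ K.Normal := by
    intro K hK hN
    obtain ⟨H, hH⟩ := hpdvd 1 (by rw [hcard, pow_one]; exact ⟨p * q, by ring⟩)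
    rw [pow_one] at hH
    haveI := hN
    have := aux_sup_card (H := H) (K := K) (by rw [hH, hK]; exact hcop)
    exact hno (H ⊔ K) (by rw [this, hH, hK])
  -- Step 2: count Sylow q-subgroups to get p = 2, q = 3
  obtain ⟨Q⟩ : Nonempty (Sylow q G) := inferInstance
  have hQcard : Nat.card Q = q := by
    rw [Sylow.card_eq_multiplicity, hcard]
    congr 1
    rw [Nat.factorization_mul (pow_ne_zero 2 hppos.ne') hq.pos.ne',
      hp.factorization_pow]
    simp [Nat.Prime.factorization hq, Finsupp.single_apply, hpqne]
  have hQindex : (Q : Subgroup G).index = p ^ 2 := by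
    have h1 := Subgroup.card_mul_index (Q : Subgroup G)
    rw [hQcard, hcard] at h1
    have hq0 : q ≠ 0 := hq.pos.ne'
    have : q * (Q : Subgroup G).index = q * p ^ 2 := by rw [h1]; ring
    exact Nat.eq_of_mul_eq_mul_left hq.pos this
  have hndvd : Nat.card (Sylow q G) ∣ p ^ 2 := hQindex ▸ Sylow.card_dvd_index Q
  have hnmod : Nat.card (Sylow q G) ≡ 1 [MOD q] := card_sylow_modEq_one q G
  have hnne1 : Nat.card (Sylow q G) ≠ 1 := by
    intro h1
    haveI : Subsingleton (Sylow q G) := (Nat.card_eq_one_iff_unique.mp h1).1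
    have hnorm : (Q : Subgroup G).Normal := by
      rw [← Subgroup.normalizer_eq_top_iff]
      ext g
      simp only [Subgroup.mem_top, iff_true]
      have : g • Q = Q := Subsingleton.elim _ _
      exact Sylow.smul_eq_iff_mem_normalizer.mp this
    exact hnoq Q hQcard hnorm
  have hpq2 : p = 2 ∧ q = 3 := by
    obtain ⟨i, hi, hni⟩ := (Nat.dvd_prime_pow hp).mp hndvd
    have hq1 : ¬ q ∣ p - 1 := by
      intro h
      have h1 : p - 1 ≠ 0 := by omega
      have := Nat.le_of_dvd (Nat.pos_of_ne_zero h1) h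
      omega
    rw [hni] at hnmod hnne1
    interval_cases i
    · exact absurd (by simpa using rfl) hnne1
    · -- n = p : q ∣ p - 1
      exfalso
      rw [pow_one] at hnmod
      have : q ∣ p - 1 := (Nat.modEq_iff_dvd' (by omega)).mp hnmod.symm
      exact hq1 this
    · -- n = p^2 : q ∣ p^2 - 1 = (p+1)(p-1)
      have hd2 : q ∣ p ^ 2 - 1 := (Nat.modEq_iff_dvd' (Nat.one_le_pow _ _ hppos)).mp hnmod.symm
      rw [show p ^ 2 - 1 = p ^ 2 - 1 ^ 2 by norm_num, Nat.sq_sub_sq] at hd2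
      rcases (Nat.Prime.dvd_mul hq).mp hd2 with h | h
      · have := Nat.le_of_dvd (by omega) h
        have hqp1 : q = p + 1 := by omega
        rcases hp.eq_two_or_odd' with rfl | hodd
        · constructor <;> omega
        · exfalso
          have : Even q := by rw [hqp1]; exact Odd.add_one hodd
          have := (Nat.Prime.even_iff hq).mp this
          omega
      · exact absurd h hq1
  obtain ⟨rfl, rfl⟩ := hpq2
  -- so card G = 12
  norm_num at hcard
  -- Step 3: the number of Sylow 3-subgroups is 4
  norm_num at hndvd
  have hn4 : Nat.card (Sylow 3 G) = 4 := by
    have hpos : 0 < Nat.card (Sylow 3 G) := Nat.card_pos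
    have hle : Nat.card (Sylow 3 G) ≤ 4 := Nat.le_of_dvd (by norm_num) hndvd
    have h' : Nat.card (Sylow 3 G) % 3 = 1 % 3 := hnmod
    generalize hm : Nat.card (Sylow 3 G) = m at hpos hle h' hndvd hnne1
    interval_cases m <;> omega
  -- Step 4: the action on Sylow 3-subgroups is faithful
  have hNcard : Nat.card ((Subgroup.normalizer (Q : Set G))) = 3 := by
    have h1 : (Subgroup.normalizer (Q : Set G)).index = 4 := by
      rw [← Sylow.card_eq_index_normalizer, hn4]
    have h2 := Subgroup.card_mul_index (Subgroup.normalizer (Q : Set G))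
    rw [h1, hcard] at h2
    omega
  set φ := MulAction.toPermHom G (Sylow 3 G) with hφ
  have hker_le : φ.ker ≤ (Subgroup.normalizer (Q : Set G)) := by
    intro g hg
    rw [← Sylow.stabilizer_eq_normalizer]
    have : φ g = 1 := hg
    have : g • Q = Q := by
      have := congrArg (fun (σ : Equiv.Perm (Sylow 3 G)) => σ Q) this
      simpa [φ, MulAction.toPermHom] using this
    exact this
  have hker_card : Nat.card φ.ker ∣ 3 := by
    have := Subgroup.card_dvd_of_le hker_le
    rwa [hNcard] at this
  have hker_bot : φ.ker = ⊥ := by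
    rcases (Nat.Prime.eq_one_or_self_of_dvd (by norm_num) _ hker_card) with h | h
    · exact Subgroup.card_eq_one.mp h
    · exfalso
      have h1 : φ.ker = (Subgroup.normalizer (Q : Set G)) :=
        aux_eq_of_le_card hker_le (by rw [h, hNcard])
      have h2 : (Q : Subgroup G) = (Subgroup.normalizer (Q : Set G)) :=
        aux_eq_of_le_card Subgroup.le_normalizer (by rw [hQcard, hNcard])
      have h3 : (Q : Subgroup G) = φ.ker := h2.trans h1.symm
      have : (Q : Subgroup G).Normal := h3 ▸ φ.normal_ker
      exact hnoq Q hQcard this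
  have hinj : Function.Injective φ := (MonoidHom.ker_eq_bot_iff φ).mp hker_bot
  -- Step 5: transport to Perm (Fin 4)
  have hcard4 : Nat.card (Sylow 3 G) = 4 := hn4
  obtain ⟨e⟩ : Nonempty (Sylow 3 G ≃ Fin 4) := by
    have : Fintype (Sylow 3 G) := Fintype.ofFinite _
    rw [Nat.card_eq_fintype_card] at hcard4
    exact ⟨Fintype.equivFinOfCardEq hcard4⟩
  set ψ : G →* Equiv.Perm (Fin 4) := (permMulEquiv e).toMonoidHom.comp φ with hψ
  have hψinj : Function.Injective ψ := (permMulEquiv e).injective.comp hinj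
  have eG : G ≃* ψ.range := MonoidHom.ofInjective hψinj
  have hrange_card : Nat.card ψ.range = 12 := by
    rw [← Nat.card_congr eG.toEquiv]
    exact hcard
  have hS4 : Nat.card (Equiv.Perm (Fin 4)) = 24 := by
    rw [Nat.card_eq_fintype_card, Fintype.card_perm, Fintype.card_fin]
    decide
  have hidx : ψ.range.index = 2 := by
    have := Subgroup.card_mul_index ψ.range
    rw [hrange_card, hS4] at this
    omega
  have hA4le : alternatingGroup (Fin 4) ≤ ψ.range := by
    rw [← Equiv.Perm.closure_three_cycles_eq_alternating]
    rw [Subgroup.closure_le]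
    intro σ hσ
    have horder : orderOf σ = 3 := Equiv.Perm.IsThreeCycle.orderOf hσ
    have hσ4 : (σ ^ 2) ^ 2 = σ := by
      rw [← pow_mul]
      have : σ ^ 3 = 1 := by rw [← horder]; exact pow_orderOf_eq_one σ
      calc σ ^ (2 * 2) = σ ^ 3 * σ := by rw [← pow_succ]
        _ = σ := by rw [this, one_mul]
    have := Subgroup.sq_mem_of_index_two hidx (σ ^ 2)
    rwa [hσ4] at this
  have hA4card : Nat.card (alternatingGroup (Fin 4)) = 12 := by
    have h2 := two_mul_card_alternatingGroup (α := Fin 4)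
    rw [Fintype.card_perm, Fintype.card_fin] at h2
    simp only [← Nat.card_eq_fintype_card] at h2
    have h24 : Nat.factorial 4 = 24 := by decide
    rw [h24] at h2
    omega
  have hEq : alternatingGroup (Fin 4) = ψ.range :=
    aux_eq_of_le_card hA4le (by rw [hA4card, hrange_card])
  exact ⟨eG.trans (MulEquiv.subgroupCongr hEq.symm)⟩
end
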